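/- The function μ(c) = exp(3√c) · (1 + 3√c/(c + 3√c))^(−c − 6√c), defined for real c ≥ 1, is monotonically decreasing in c. -/

import Mathlib

open Real Set

lemma log_lb {t : ℝ} (ht : 0 ≤ t) : t - t^2/2 ≤ Real.log (1+t) := by
  have hd : ∀ x ∈ Ici (0:ℝ), HasDerivAt (fun y => Real.log (1+y) - (y - y^2/2))
      (1/(1+x) - (1 - 2*x^1/2)) x := by
    intro x hx
    have hx0 : (0:ℝ) ≤ x := hx
    have h1 : HasDerivAt (fun y => Real.log (1+y)) (1/(1+x)) x := by
      have := ((hasDerivAt_id x).const_add 1).log (by positivity)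
      simpa using this
    have h2 : HasDerivAt (fun y : ℝ => y - y^2/2) (1 - 2*x^1/2) x :=
      (hasDerivAt_id x).sub ((hasDerivAt_pow 2 x).div_const 2)
    exact h1.sub h2
  have mono : MonotoneOn (fun y => Real.log (1+y) - (y - y^2/2)) (Ici 0) := by
    apply monotoneOn_of_deriv_nonneg (convex_Ici 0)
    · exact fun x hx => (hd x hx).continuousAt.continuousWithinAt
    · intro x hx
      rw [interior_Ici] at hx
      exact (hd x (mem_Ici.mpr (le_of_lt (mem_Ioi.mp hx)))).differentiableAt.differentiableWithinAt
    · intro x hx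
      rw [interior_Ici] at hx
      rw [(hd x (mem_Ici.mpr (le_of_lt (mem_Ioi.mp hx)))).deriv]
      have hx0 : (0:ℝ) < x := hx
      have h : 1/(1+x) - (1 - 2*x^1/2) = x^2/(1+x) := by field_simp; ring
      rw [h]; positivity
  have := mono (self_mem_Ici) ht ht
  simpa using this

noncomputable def hfun (x : ℝ) : ℝ := 3*x - (x^2 + 6*x) * (Real.log (x+6) - Real.log (x+3))

lemma hfun_hasDeriv {x : ℝ} (hx : 0 < x) :
    HasDerivAt hfun (3*1 - ((2*x^1 + 6*1) * (Real.log (x+6) - Real.log (x+3))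
      + (x^2 + 6*x) * (1/(x+6) - 1/(x+3)))) x := by
  have h6 : HasDerivAt (fun y : ℝ => Real.log (y+6)) (1/(x+6)) x := by
    have := ((hasDerivAt_id x).add_const 6).log (by positivity)
    simpa using this
  have h3 : HasDerivAt (fun y : ℝ => Real.log (y+3)) (1/(x+3)) x := by
    have := ((hasDerivAt_id x).add_const 3).log (by positivity)
    simpa using this
  have hp : HasDerivAt (fun y : ℝ => y^2 + 6*y) (2*x^1 + 6*1) x :=
    (hasDerivAt_pow 2 x).add ((hasDerivAt_id x).const_mul 6)
  have h1 : HasDerivAt (fun y : ℝ => 3*y) (3*1) x := (hasDerivAt_id x).const_mul 3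
  exact h1.sub (hp.mul (h6.sub h3))

lemma hfun_antitone : AntitoneOn hfun (Ici 1) := by
  apply antitoneOn_of_deriv_nonpos (convex_Ici 1)
  · exact fun x hx => (hfun_hasDeriv (lt_of_lt_of_le one_pos hx)).continuousAt.continuousWithinAt
  · intro x hx
    rw [interior_Ici] at hx
    exact (hfun_hasDeriv (lt_trans one_pos hx)).differentiableAt.differentiableWithinAt
  · intro x hx
    rw [interior_Ici] at hx
    have hx0 : (0:ℝ) < x := lt_trans one_pos hx
    rw [(hfun_hasDeriv hx0).deriv]
    have hx3 : (0:ℝ) < x + 3 := by linarith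
    have hx6 : (0:ℝ) < x + 6 := by linarith
    set t : ℝ := 3/(x+3) with ht
    have ht0 : 0 ≤ t := by positivity
    have h1t : 1 + t = (x+6)/(x+3) := by
      rw [ht]; field_simp; ring
    have hL : Real.log (x+6) - Real.log (x+3) = Real.log (1+t) := by
      rw [h1t, Real.log_div (by positivity) (by positivity)]
    have key := log_lb ht0
    have hLge : t - t^2/2 ≤ Real.log (x+6) - Real.log (x+3) := by rw [hL]; exact key
    have h2x : (0:ℝ) < 2*x^1 + 6*1 := by simp; linarith
    have hmul : (2*x^1 + 6*1) * (t - t^2/2) ≤ (2*x^1 + 6*1) * (Real.log (x+6) - Real.log (x+3)) :=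
      mul_le_mul_of_nonneg_left hLge (le_of_lt h2x)
    have heq : (2*x^1 + 6*1) * (t - t^2/2) = 3*1 - (x^2 + 6*x) * (1/(x+6) - 1/(x+3)) := by
      rw [ht]; field_simp; ring
    linarith [hmul]

theorem mu_antitoneOn :
    AntitoneOn (fun c : ℝ =>
      Real.exp (3 * Real.sqrt c) *
        (1 + 3 * Real.sqrt c / (c + 3 * Real.sqrt c)) ^ (-c - 6 * Real.sqrt c))
      (Set.Ici (1 : ℝ)) := by
  have key : ∀ c : ℝ, c ∈ Set.Ici (1:ℝ) →
      Real.exp (3 * Real.sqrt c) *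
        (1 + 3 * Real.sqrt c / (c + 3 * Real.sqrt c)) ^ (-c - 6 * Real.sqrt c)
      = Real.exp (hfun (Real.sqrt c)) := by
    intro c hc
    have hc0 : (0:ℝ) ≤ c := le_trans zero_le_one hc
    set s := Real.sqrt c with hs
    have hs1 : 1 ≤ s := by
      rw [hs]
      exact Real.one_le_sqrt.mpr hc
    have hsq : s^2 = c := Real.sq_sqrt hc0
    have hs0 : 0 < s := lt_of_lt_of_le one_pos hs1
    have hbase : 1 + 3*s/(c + 3*s) = (s+6)/(s+3) := by
      rw [← hsq]; field_simp; ring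
    have hbpos : (0:ℝ) < (s+6)/(s+3) := by positivity
    rw [hbase, Real.rpow_def_of_pos hbpos, ← Real.exp_add,
      Real.log_div (by positivity) (by positivity)]
    congr 1
    rw [hfun, ← hsq]
    ring
  intro a ha b hb hab
  simp only
  rw [key a ha, key b hb]
  exact Real.exp_le_exp.mpr (hfun_antitone
    (mem_Ici.mpr (Real.one_le_sqrt.mpr ha))
    (mem_Ici.mpr (Real.one_le_sqrt.mpr hb))
    (Real.sqrt_le_sqrt hab))
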